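/- Consider the SIR⁽²⁾S model with vaccination. Every stationary state (s̄, ī, r̄₀, r̄₁) with ī > 0 satisfies: (a) s̄ + r̄₁/2 = 1/R₀; (b) s̄ = (μ + 2·c₂/R₀)/(β·ī + μ + η_s + 2·c₂); (c) r̄₀ = (η_s·s̄ + γ·ī + η₁·r̄₁)/(c₁+μ). -/
import Mathlib


/-- A stationary state of the SIR⁽²⁾S model with vaccination: nonnegative entries summing
to 1, satisfying the stationarity equations with vaccination rates ηs, η₁. -/
def IsStationarySIR2SVac (β γ μ c₁ c₂ ηs η₁ s i r₀ r₁ : ℝ) : Prop :=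
  0 ≤ s ∧ 0 ≤ i ∧ 0 ≤ r₀ ∧ 0 ≤ r₁ ∧ s + i + r₀ + r₁ = 1 ∧
  μ - β * s * i + c₂ * r₁ - μ * s - ηs * s = 0 ∧
  β * s * i + (β / 2) * r₁ * i - (γ + μ) * i = 0 ∧
  ηs * s + γ * i - (c₁ + μ) * r₀ + η₁ * r₁ = 0 ∧
  c₁ * r₀ - (β / 2) * r₁ * i - (c₂ + μ + η₁) * r₁ = 0

/-- Every endemic stationary state (ī > 0) of the SIR⁽²⁾S model with vaccination satisfies
(a) s̄ + r̄₁/2 = 1/R₀, (b) s̄ = (μ + 2c₂/R₀)/(β·ī + μ + ηs + 2c₂), and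
(c) r̄₀ = (ηs·s̄ + γ·ī + η₁·r̄₁)/(c₁+μ), where R₀ = β/(γ+μ). -/
theorem sir2s_vac_endemic_identities
    (β γ μ c₁ c₂ ηs η₁ : ℝ) (hβ : 0 < β) (hγ : 0 < γ) (hμ : 0 < μ)
    (hc₁ : 0 < c₁) (hc₂ : 0 < c₂) (hηs : 0 ≤ ηs) (hη₁ : 0 ≤ η₁)
    (s i r₀ r₁ : ℝ)
    (hstat : IsStationarySIR2SVac β γ μ c₁ c₂ ηs η₁ s i r₀ r₁)
    (hi : 0 < i) :
    s + r₁ / 2 = 1 / (β / (γ + μ)) ∧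
    s = (μ + 2 * c₂ / (β / (γ + μ))) / (β * i + μ + ηs + 2 * c₂) ∧
    r₀ = (ηs * s + γ * i + η₁ * r₁) / (c₁ + μ) := by
  obtain ⟨hs, hi', hr₀, hr₁, hsum, h1, h2, h3, h4⟩ := hstat
  have hγμ : (0:ℝ) < γ + μ := by linarith
  have ha : s + r₁ / 2 = 1 / (β / (γ + μ)) := by
    have h2' : β * s + (β / 2) * r₁ - (γ + μ) = 0 := by
      have := mul_left_cancel₀ (ne_of_gt hi)
        (show i * (β * s + (β / 2) * r₁ - (γ + μ)) = i * 0 by ring_nf; linarith [h2])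
      linarith [this]
    field_simp
    linarith
  refine ⟨ha, ?_, ?_⟩
  · have hden : (0:ℝ) < β * i + μ + ηs + 2 * c₂ := by positivity
    have hr1 : r₁ = 2 * ((γ + μ) / β - s) := by
      have : s + r₁ / 2 = (γ + μ) / β := by
        rw [ha]; rw [one_div_div]
      linarith
    rw [eq_div_iff (ne_of_gt hden)]
    rw [hr1] at h1
    field_simp at h1 ⊢
    ring_nf at h1 ⊢
    nlinarith [h1]
  · rw [eq_div_iff (by positivity : (c₁ + μ : ℝ) ≠ 0)]
    linarith
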